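/- For the stochastic tandem queueing system with infinite buffers, suppose the sequences {τ_{i,n} : n = 1, 2, …}, i = 0, 1, …, M, are mutually independent sequences of independent and identically distributed nonnegative random variables with 0 ≤ E[τ_{i,1}] < ∞ and Var[τ_{i,1}] < ∞. Then with probability one, lim_{n→∞} D_M(n)/n = max_{0 ≤ i ≤ M} E[τ_{i,1}]. -/

import Mathlib

open MeasureTheory ProbabilityTheory Finset Filter

/-- Departure epochs of the tandem queueing system with infinite buffers. -/
noncomputable def depart (τ : ℕ → ℕ → ℝ) : ℕ → ℕ → ℝ
  | 0, 0 => 0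
  | 0, n + 1 => depart τ 0 n + τ 0 (n + 1)
  | _ + 1, 0 => 0
  | m + 1, n + 1 =>
      max (depart τ m (n + 1)) (depart τ (m + 1) n) + τ (m + 1) (n + 1)
  termination_by m n => (m, n)

open Topology
section AuxTandem

/-- Partial sums of service times of server `i`. -/
noncomputable def Sq (t : ℕ → ℕ → ℝ) (i n : ℕ) : ℝ := ∑ k ∈ Finset.range n, t i (k+1)

lemma depart_m_zero (t : ℕ → ℕ → ℝ) (m : ℕ) : depart t m 0 = 0 := by
  cases m <;> rw [depart]

lemma depart_zero_succ (t : ℕ → ℕ → ℝ) (n : ℕ) :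
    depart t 0 (n+1) = depart t 0 n + t 0 (n+1) := by rw [depart]

lemma depart_succ_succ (t : ℕ → ℕ → ℝ) (m n : ℕ) :
    depart t (m+1) (n+1) = max (depart t m (n+1)) (depart t (m+1) n) + t (m+1) (n+1) := by
  rw [depart]

lemma depart_zero_eq_Sq (t : ℕ → ℕ → ℝ) (n : ℕ) : depart t 0 n = Sq t 0 n := by
  induction n with
  | zero => rw [depart]; simp [Sq]
  | succ n ih => rw [depart_zero_succ, ih]; simp [Sq, Finset.sum_range_succ]

lemma depart_nonneg (t : ℕ → ℕ → ℝ) (hnn : ∀ i n, 0 ≤ t i n) :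
    ∀ m n, 0 ≤ depart t m n := by
  intro m
  induction m with
  | zero =>
    intro n
    induction n with
    | zero => rw [depart]
    | succ n ih => rw [depart_zero_succ]; exact add_nonneg ih (hnn _ _)
  | succ m ihm =>
    intro n
    induction n with
    | zero => rw [depart_m_zero]
    | succ n ihn =>
      rw [depart_succ_succ]
      exact add_nonneg (le_trans (ihm (n+1)) (le_max_left _ _)) (hnn _ _)

lemma depart_le_succ_m (t : ℕ → ℕ → ℝ) (hnn : ∀ i n, 0 ≤ t i n) (m n : ℕ) :
    depart t m n ≤ depart t (m+1) n := by
  cases n with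
  | zero => rw [depart_m_zero, depart_m_zero]
  | succ n =>
    rw [depart_succ_succ]
    calc depart t m (n+1) ≤ max (depart t m (n+1)) (depart t (m+1) n) := le_max_left _ _
    _ ≤ _ := le_add_of_nonneg_right (hnn _ _)

lemma depart_mono_m (t : ℕ → ℕ → ℝ) (hnn : ∀ i n, 0 ≤ t i n) {i m : ℕ} (h : i ≤ m) (n : ℕ) :
    depart t i n ≤ depart t m n := by
  induction m with
  | zero => have : i = 0 := by omega
            subst this; exact le_refl _
  | succ m ihm =>
    rcases Nat.lt_or_ge i (m+1) with hlt | hge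
    · exact le_trans (ihm (by omega)) (depart_le_succ_m t hnn m n)
    · have : i = m + 1 := by omega
      subst this; exact le_refl _

lemma depart_add_le (t : ℕ → ℕ → ℝ) (m n : ℕ) :
    depart t m n + t m (n+1) ≤ depart t m (n+1) := by
  cases m with
  | zero => rw [depart_zero_succ]
  | succ m =>
    rw [depart_succ_succ]
    exact add_le_add_left (le_max_right _ _) _

lemma Sq_le_depart (t : ℕ → ℕ → ℝ) (m n : ℕ) : Sq t m n ≤ depart t m n := by
  induction n with
  | zero => simp [Sq, depart_m_zero]
  | succ n ih =>
    rw [Sq, Finset.sum_range_succ]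
    exact le_trans (add_le_add_left ih _) (depart_add_le t m n)

lemma depart_le_sup' (t : ℕ → ℕ → ℝ) (hnn : ∀ i n, 0 ≤ t i n) (m n : ℕ) :
    depart t (m+1) (n+1) ≤
      (Finset.range (n+1)).sup' (Finset.nonempty_range_iff.mpr (Nat.succ_ne_zero n))
        (fun k => depart t m (k+1) + (Sq t (m+1) (n+1) - Sq t (m+1) k)) := by
  induction n with
  | zero =>
    rw [depart_succ_succ, depart_m_zero, max_eq_left (depart_nonneg t hnn m 1)]
    refine le_trans ?_ (Finset.le_sup' _ (Finset.self_mem_range_succ 0))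
    simp [Sq]
  | succ n ih =>
    rw [depart_succ_succ, ← max_add_add_right]
    apply max_le
    · refine le_trans ?_ (Finset.le_sup' _ (Finset.self_mem_range_succ (n+1)))
      have : Sq t (m+1) (n+2) - Sq t (m+1) (n+1) = t (m+1) (n+2) := by
        rw [Sq, Sq, Finset.sum_range_succ]; ring
      rw [this]
    · obtain ⟨k, hk, hkeq⟩ := Finset.exists_mem_eq_sup' (Finset.nonempty_range_iff.mpr
        (Nat.succ_ne_zero n)) (fun k => depart t m (k+1) + (Sq t (m+1) (n+1) - Sq t (m+1) k))
      refine le_trans (add_le_add_left ih _) ?_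
      rw [hkeq]
      have hk2 : k ∈ Finset.range (n+2) := Finset.mem_range.mpr (by
        have := Finset.mem_range.mp hk; omega)
      refine le_trans ?_ (Finset.le_sup' _ hk2)
      have : Sq t (m+1) (n+2) = Sq t (m+1) (n+1) + t (m+1) (n+2) := by
        rw [Sq, Sq, Finset.sum_range_succ]
      rw [this]; ring_nf; exact le_refl _

lemma depart_upper (t : ℕ → ℕ → ℝ) (B ms δ : ℝ) (hB : 0 ≤ B) (hμ : 0 ≤ ms) (hδ : 0 ≤ δ)
    (hnn : ∀ i n, 0 ≤ t i n)
    (H : ∀ i j k : ℕ, j ≤ k → Sq t i k - Sq t i j ≤ B + ms * ((k : ℝ) - j) + δ * k) :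
    ∀ m n : ℕ, depart t m n ≤ ((m : ℝ)+1) * B + ms * ((n : ℝ) + m) + ((m : ℝ)+1) * δ * n := by
  intro m
  induction m with
  | zero =>
    intro n
    have h := H 0 0 n (Nat.zero_le n)
    rw [depart_zero_eq_Sq]
    have h0 : Sq t 0 0 = 0 := by simp [Sq]
    rw [h0] at h
    push_cast at h ⊢
    linarith
  | succ m ihm =>
    intro n
    cases n with
    | zero =>
      rw [depart_m_zero]
      push_cast
      nlinarith [mul_nonneg hμ (by positivity : (0:ℝ) ≤ (m:ℝ)+1),
        mul_nonneg (by positivity : (0:ℝ) ≤ (m:ℝ)+2) hB]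
    | succ n =>
      refine le_trans (depart_le_sup' t hnn m n) (Finset.sup'_le _ _ ?_)
      intro k hk
      have hkn : k ≤ n := by have := Finset.mem_range.mp hk; omega
      have h1 := ihm (k+1)
      have h2 := H (m+1) k (n+1) (by omega)
      have hkr : (k:ℝ) ≤ n := Nat.cast_le.mpr hkn
      have h3 : δ * ((k:ℝ)+1) ≤ δ * ((n:ℝ)+1) := by
        apply mul_le_mul_of_nonneg_left (by linarith) hδ
      have h4 := mul_le_mul_of_nonneg_left h3 (by positivity : (0:ℝ) ≤ (m:ℝ)+1)
      push_cast at h1 h2 ⊢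
      nlinarith [h1, h2, h4]

lemma depart_congr (t t' : ℕ → ℕ → ℝ) :
    ∀ m, (∀ i ≤ m, ∀ k, 1 ≤ k → t i k = t' i k) → ∀ n, depart t m n = depart t' m n := by
  intro m
  induction m with
  | zero =>
    intro h n
    induction n with
    | zero => rw [depart_m_zero, depart_m_zero]
    | succ n ih =>
      rw [depart_zero_succ, depart_zero_succ, ih, h 0 le_rfl (n+1) (by omega)]
  | succ m ihm =>
    intro h n
    have hm := ihm (fun i hi k hk => h i (by omega) k hk)
    induction n with
    | zero => rw [depart_m_zero, depart_m_zero]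
    | succ n ihn =>
      rw [depart_succ_succ, depart_succ_succ, hm (n+1), ihn, h (m+1) le_rfl (n+1) (by omega)]

lemma exists_linear_bound (u : ℕ → ℝ) (c δ : ℝ) (hδ : 0 < δ)
    (h : Tendsto (fun n => u n / n) atTop (𝓝 c)) :
    ∃ B : ℝ, 0 ≤ B ∧ ∀ n : ℕ, |u n - c * n| ≤ B + δ * n := by
  obtain ⟨N, hN⟩ := Metric.tendsto_atTop.mp h δ hδ
  refine ⟨∑ k ∈ Finset.range (N+1), |u k - c * k|,
    Finset.sum_nonneg (fun k _ => abs_nonneg _), ?_⟩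
  intro n
  by_cases hn : n ≤ N
  · have h1 : |u n - c * n| ≤ ∑ k ∈ Finset.range (N+1), |u k - c * k| :=
      Finset.single_le_sum (f := fun k => |u k - c * (k:ℕ)|) (fun k _ => abs_nonneg _)
        (Finset.mem_range.mpr (by omega))
    have h2 : (0:ℝ) ≤ δ * n := by positivity
    linarith
  · have hd := hN n (by omega)
    rw [Real.dist_eq] at hd
    have hnp : (0:ℝ) < n := by
      have : 1 ≤ n := by omega
      exact_mod_cast Nat.lt_of_lt_of_le Nat.zero_lt_one this
    have heq : u n - c * n = (u n / n - c) * n := by field_simp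
    have h1 : |u n - c * n| ≤ δ * n := by
      rw [heq, abs_mul, abs_of_pos hnp]
      exact mul_le_mul_of_nonneg_right hd.le hnp.le
    have h2 : (0:ℝ) ≤ ∑ k ∈ Finset.range (N+1), |u k - c * k| :=
      Finset.sum_nonneg (fun k _ => abs_nonneg _)
    linarith

lemma det_tendsto (t : ℕ → ℕ → ℝ) (M : ℕ) (μv : ℕ → ℝ) (mstar : ℝ)
    (hnn : ∀ i n, 0 ≤ t i n)
    (hzero : ∀ i, M < i → ∀ n, 1 ≤ n → t i n = 0)
    (hms : ∀ i ≤ M, μv i ≤ mstar) (hms0 : 0 ≤ mstar)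
    (hex : ∃ i, i ≤ M ∧ μv i = mstar)
    (hS : ∀ i ≤ M, Tendsto (fun n => Sq t i n / n) atTop (𝓝 (μv i))) :
    Tendsto (fun n => depart t M n / n) atTop (𝓝 mstar) := by
  rw [Metric.tendsto_atTop]
  intro ε hε
  obtain ⟨i0, hi0, hi0eq⟩ := hex
  -- lower bound data
  obtain ⟨N1, hN1⟩ := Metric.tendsto_atTop.mp (hS i0 hi0) ε hε
  -- upper bound data
  set δ : ℝ := ε / (2 * (M + 1)) with hδdef
  have hδ : 0 < δ := by positivity
  have hBex : ∀ i : ℕ, ∃ B : ℝ, 0 ≤ B ∧ ∀ j k : ℕ, j ≤ k →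
      Sq t i k - Sq t i j ≤ B + mstar * ((k:ℝ) - j) + δ * k := by
    intro i
    by_cases hi : i ≤ M
    · obtain ⟨B0, hB0, hB0'⟩ := exists_linear_bound (Sq t i) (μv i) (δ/2) (by positivity)
        (hS i hi)
      refine ⟨2 * B0, by linarith, ?_⟩
      intro j k hjk
      have hk := hB0' k
      have hj := hB0' j
      have hjk' : (j:ℝ) ≤ k := Nat.cast_le.mpr hjk
      have h1 : μv i * ((k:ℝ) - j) ≤ mstar * ((k:ℝ) - j) :=
        mul_le_mul_of_nonneg_right (hms i hi) (by linarith)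
      have hk1 : Sq t i k - μv i * k ≤ B0 + δ/2 * k := by
        have := abs_le.mp hk; linarith [this.2]
      have hj1 : -(B0 + δ/2 * j) ≤ Sq t i j - μv i * j := by
        have := abs_le.mp hj; linarith [this.1]
      have hjr : δ/2 * (j:ℝ) ≤ δ/2 * k := by
        apply mul_le_mul_of_nonneg_left hjk' (by positivity)
      nlinarith
    · refine ⟨0, le_refl _, ?_⟩
      intro j k hjk
      have hSk : Sq t i k = 0 := Finset.sum_eq_zero (fun x _ => hzero i (by omega) (x+1) (by omega))
      have hSj : Sq t i j = 0 := Finset.sum_eq_zero (fun x _ => hzero i (by omega) (x+1) (by omega))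
      have hjk' : (j:ℝ) ≤ k := Nat.cast_le.mpr hjk
      have h1 : 0 ≤ mstar * ((k:ℝ) - j) := mul_nonneg hms0 (by linarith)
      have h2 : (0:ℝ) ≤ δ * k := by positivity
      rw [hSk, hSj]
      linarith
  choose Bf hBf0 hBf using hBex
  set B : ℝ := ∑ i ∈ Finset.range (M+1), Bf i with hBdef
  have hB0 : 0 ≤ B := Finset.sum_nonneg (fun i _ => hBf0 i)
  have HB : ∀ i j k : ℕ, j ≤ k →
      Sq t i k - Sq t i j ≤ B + mstar * ((k:ℝ) - j) + δ * k := by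
    intro i j k hjk
    by_cases hi : i ≤ M
    · have hle : Bf i ≤ B := Finset.single_le_sum (f := Bf) (fun i _ => hBf0 i)
        (Finset.mem_range.mpr (by omega))
      have := hBf i j k hjk
      linarith
    · have hSk : Sq t i k = 0 := Finset.sum_eq_zero (fun x _ => hzero i (by omega) (x+1) (by omega))
      have hSj : Sq t i j = 0 := Finset.sum_eq_zero (fun x _ => hzero i (by omega) (x+1) (by omega))
      have hjk' : (j:ℝ) ≤ k := Nat.cast_le.mpr hjk
      have h1 : 0 ≤ mstar * ((k:ℝ) - j) := mul_nonneg hms0 (by linarith)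
      have h2 : (0:ℝ) ≤ δ * k := by positivity
      rw [hSk, hSj]; linarith
  have hupper := depart_upper t B mstar δ hB0 hms0 hδ.le hnn HB M
  -- constant for the upper error term
  set C : ℝ := ((M:ℝ)+1) * B + mstar * M with hCdef
  have hC0 : 0 ≤ C := by positivity
  have hCto : Tendsto (fun n : ℕ => C / n) atTop (𝓝 0) :=
    tendsto_const_div_atTop_nhds_zero_nat C
  obtain ⟨N2, hN2⟩ := Metric.tendsto_atTop.mp hCto (ε/2) (by positivity)
  refine ⟨max N1 (max N2 1), ?_⟩
  intro n hn
  have hnN1 : N1 ≤ n := le_trans (le_max_left _ _) hn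
  have hnN2 : N2 ≤ n := le_trans (le_trans (le_max_left _ _) (le_max_right _ _)) hn
  have hn1 : 1 ≤ n := le_trans (le_trans (le_max_right _ _) (le_max_right _ _)) hn
  have hnp : (0:ℝ) < n := by exact_mod_cast Nat.lt_of_lt_of_le Nat.zero_lt_one hn1
  rw [Real.dist_eq, abs_sub_lt_iff]
  constructor
  · -- upper: depart/n - mstar < ε
    have hup : depart t M n ≤ C + mstar * n + (ε/2) * n := by
      have h1 := hupper n
      have hδn : ((M:ℝ)+1) * δ * n = (ε/2) * n := by
        rw [hδdef]; field_simp
      rw [hCdef]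
      nlinarith [h1]
    have hCn := hN2 n hnN2
    rw [Real.dist_eq, sub_zero] at hCn
    have hCn' : C / n < ε/2 := lt_of_abs_lt hCn
    have hdiv : depart t M n / n ≤ C / n + mstar + ε/2 := by
      rw [div_le_iff₀ hnp]
      have : (C / n + mstar + ε/2) * n = C / n * n + mstar * n + ε/2 * n := by ring
      rw [this, div_mul_cancel₀ _ hnp.ne']
      linarith
    linarith
  · -- lower: mstar - depart/n < ε
    have hSd : Sq t i0 n ≤ depart t M n :=
      le_trans (Sq_le_depart t i0 n) (depart_mono_m t hnn hi0 n)
    have h1 := hN1 n hnN1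
    rw [Real.dist_eq] at h1
    have h2 : μv i0 - Sq t i0 n / n < ε := by
      have := abs_lt.mp h1; linarith [this.1]
    have h3 : Sq t i0 n / n ≤ depart t M n / n := (div_le_div_iff_of_pos_right hnp).mpr hSd
    rw [hi0eq] at h2
    linarith

end AuxTandem

/-- **Exact mean cycle time.** If the interarrival and service times `τ i n`,
`i = 0, …, M`, `n = 1, 2, …`, form mutually independent sequences of i.i.d.
nonnegative random variables with finite means and finite variances, then
with probability one `D_M(n)/n → max_{0 ≤ i ≤ M} E[τ i 1]`. -/
theorem mean_cycle_time_eq_max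
    {Ω : Type*} [MeasurableSpace Ω] (μ : Measure Ω) [IsProbabilityMeasure μ]
    (M : ℕ) (τ : ℕ → ℕ → Ω → ℝ)
    (hpos : ∀ i ≤ M, ∀ n, 1 ≤ n → ∀ ω, 0 ≤ τ i n ω)
    (hmeas : ∀ i ≤ M, ∀ n, Measurable (τ i n))
    (hindep : iIndepFun
        (fun p : Fin (M + 1) × ℕ => τ (p.1 : ℕ) (p.2 + 1)) μ)
    (hident : ∀ i ≤ M, ∀ n, 1 ≤ n → IdentDistrib (τ i n) (τ i 1) μ μ)
    (hint : ∀ i ≤ M, Integrable (τ i 1) μ)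
    (hvar : ∀ i ≤ M, MemLp (τ i 1) 2 μ) :
    ∀ᵐ ω ∂μ, Tendsto (fun n : ℕ => depart (fun i j => τ i j ω) M n / n) atTop
      (nhds ((Finset.range (M + 1)).sup'
        (Finset.nonempty_range_iff.mpr (Nat.succ_ne_zero M))
        fun i => ∫ ω, τ i 1 ω ∂μ)) := by
  -- strong law for each row
  have slln : ∀ i : ℕ, i ≤ M → ∀ᵐ ω ∂μ,
      Tendsto (fun n : ℕ => (∑ k ∈ Finset.range n, τ i (k+1) ω) / n) atTop
        (𝓝 (∫ ω, τ i 1 ω ∂μ)) := by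
    intro i hi
    have h0 : Integrable ((fun n => τ i (n+1)) 0) μ := hint i hi
    have hpair : Pairwise (Function.onFun (fun f g => IndepFun f g μ) (fun n => τ i (n+1))) := by
      intro n m hnm
      have : ((⟨⟨i, by omega⟩, n⟩ : Fin (M+1) × ℕ)) ≠ ⟨⟨i, by omega⟩, m⟩ := by
        simp [Prod.ext_iff, hnm]
      exact hindep.indepFun this
    have hid : ∀ n : ℕ, IdentDistrib ((fun n => τ i (n+1)) n) ((fun n => τ i (n+1)) 0) μ μ :=
      fun n => hident i hi (n+1) (by omega)
    have := strong_law_ae (fun n => τ i (n+1)) h0 hpair hid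
    filter_upwards [this] with ω hω
    have : (fun n : ℕ => (∑ k ∈ Finset.range n, τ i (k+1) ω) / n)
        = fun n : ℕ => (n : ℝ)⁻¹ • ∑ k ∈ Finset.range n, τ i (k+1) ω := by
      funext n; simp [smul_eq_mul, div_eq_inv_mul]
    rw [this]
    exact hω
  have hall : ∀ᵐ ω ∂μ, ∀ i : ℕ, i ≤ M →
      Tendsto (fun n : ℕ => (∑ k ∈ Finset.range n, τ i (k+1) ω) / n) atTop
        (𝓝 (∫ ω, τ i 1 ω ∂μ)) := by
    rw [ae_all_iff]
    intro i
    by_cases hi : i ≤ M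
    · filter_upwards [slln i hi] with ω hω _ using hω
    · filter_upwards with ω hi' using absurd hi' hi
  filter_upwards [hall] with ω hω
  set μv : ℕ → ℝ := fun i => ∫ ω, τ i 1 ω ∂μ with hμv
  set mstar : ℝ := (Finset.range (M + 1)).sup'
      (Finset.nonempty_range_iff.mpr (Nat.succ_ne_zero M)) μv with hmstar
  -- modified service times
  set t : ℕ → ℕ → ℝ := fun i k => if i ≤ M ∧ 1 ≤ k then τ i k ω else 0 with ht
  have hcongr : ∀ n, depart (fun i j => τ i j ω) M n = depart t M n :=
    depart_congr _ t M (by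
      intro i hi k hk
      simp [ht, hi, hk])
  have hfun : (fun n : ℕ => depart (fun i j => τ i j ω) M n / n)
      = fun n : ℕ => depart t M n / n := by
    funext n; rw [hcongr]
  rw [hfun]
  have hnn : ∀ i n, 0 ≤ t i n := by
    intro i n
    simp only [ht]
    split
    · next h => exact hpos i h.1 n h.2 ω
    · exact le_refl 0
  have hμv0 : 0 ≤ μv 0 := integral_nonneg (fun ω' => hpos 0 (Nat.zero_le M) 1 le_rfl ω')
  have hms : ∀ i ≤ M, μv i ≤ mstar := fun i hi =>
    Finset.le_sup' μv (Finset.mem_range.mpr (by omega))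
  have hms0 : 0 ≤ mstar := le_trans hμv0 (hms 0 (Nat.zero_le M))
  have hex : ∃ i, i ≤ M ∧ μv i = mstar := by
    obtain ⟨i, hi, heq⟩ := Finset.exists_mem_eq_sup'
      (Finset.nonempty_range_iff.mpr (Nat.succ_ne_zero M)) μv
    exact ⟨i, Nat.lt_succ_iff.mp (Finset.mem_range.mp hi), heq.symm⟩
  exact det_tendsto t M μv mstar hnn
    (fun i hi n hn => by simp only [ht]; exact if_neg (by omega))
    hms hms0 hex
    (by
      intro i hi
      have hSq : ∀ n, Sq t i n = ∑ k ∈ Finset.range n, τ i (k+1) ω := by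
        intro n
        refine Finset.sum_congr rfl (fun k _ => ?_)
        simp [ht, hi]
      have : (fun n : ℕ => Sq t i n / n)
          = fun n : ℕ => (∑ k ∈ Finset.range n, τ i (k+1) ω) / n := by
        funext n; rw [hSq]
      rw [this]
      exact hω i hi)
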